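/- In the two-level model with M_A ∩ M_B = ∅ and 0 < p₀ < p_A, p_B < 1, if K₁ ⊆ M satisfies M_B ⊆ K₁ and K₁ ∩ M_A = ∅, then for any K ⊆ M the likelihood ratio satisfies P(K|B)/P(K|A) ≤ P(K₁|B)/P(K₁|A). That is, the ratio of dialect-B to dialect-A probability is maximized over message patterns by those containing all of M_B and none of M_A. -/
import Mathlib

/-- Splitting a card over a disjoint decomposition. -/
lemma card_split_aux {ι : Type*} [DecidableEq ι] (M X Y S : Finset ι)
    (hS : S ⊆ M) (hd : X ∩ Y = ∅) :
    (S ∩ (M \ Y)).card = (S ∩ X).card + (S \ (X ∪ Y)).card := by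
  have hd' : ∀ x, x ∈ X → x ∉ Y := fun x hx hy =>
    (Finset.eq_empty_iff_forall_notMem.mp hd x) (Finset.mem_inter.mpr ⟨hx, hy⟩)
  rw [← Finset.card_union_of_disjoint]
  · congr 1
    ext x
    simp only [Finset.mem_inter, Finset.mem_sdiff, Finset.mem_union, not_or]
    constructor
    · rintro ⟨hxS, _, hxY⟩
      by_cases hxX : x ∈ X
      · exact Or.inl ⟨hxS, hxX⟩
      · exact Or.inr ⟨hxS, hxX, hxY⟩
    · rintro (⟨hxS, hxX⟩ | ⟨hxS, _, hxY⟩)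
      · exact ⟨hxS, hS hxS, hd' x hxX⟩
      · exact ⟨hxS, hS hxS, hxY⟩
  · refine Finset.disjoint_left.mpr ?_
    rintro x hx hx'
    simp only [Finset.mem_inter] at hx
    simp only [Finset.mem_sdiff, Finset.mem_union, not_or] at hx'
    exact hx'.2.1 hx.2

/-- A subset of `M` splits as intersections with `S` and `M \ S`. -/
lemma card_split_compl {ι : Type*} [DecidableEq ι] (M X S : Finset ι)
    (hX : X ⊆ M) :
    (S ∩ X).card + ((M \ S) ∩ X).card = X.card := by
  rw [← Finset.card_union_of_disjoint]
  · congr 1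
    ext x
    simp only [Finset.mem_union, Finset.mem_inter, Finset.mem_sdiff]
    constructor
    · rintro (⟨_, h⟩ | ⟨_, h⟩) <;> exact h
    · intro hx
      by_cases hxS : x ∈ S
      · exact Or.inl ⟨hxS, hx⟩
      · exact Or.inr ⟨⟨hX hx, hxS⟩, hx⟩
  · refine Finset.disjoint_left.mpr ?_
    rintro x hx hx'
    simp only [Finset.mem_inter, Finset.mem_sdiff] at hx hx'
    exact hx'.1.2 hx.1

/-- The purely real inequality. -/
lemma ratio_ineq_aux (p₀ p_A p_B : ℝ) (h00 : 0 < p₀) (h0A : p₀ < p_A) (h0B : p₀ < p_B)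
    (hA1 : p_A < 1) (hB1 : p_B < 1) (a a' b b' r r' r₁ r₁' : ℕ) :
    (p₀ ^ (a + r) * (1 - p₀) ^ (a' + r') * p_B ^ b * (1 - p_B) ^ b') /
      (p₀ ^ (b + r) * (1 - p₀) ^ (b' + r') * p_A ^ a * (1 - p_A) ^ a') ≤
    (p₀ ^ (0 + r₁) * (1 - p₀) ^ ((a + a') + r₁') * p_B ^ (b + b') * (1 - p_B) ^ 0) /
      (p₀ ^ ((b + b') + r₁) * (1 - p₀) ^ (0 + r₁') * p_A ^ 0 * (1 - p_A) ^ (a + a')) := by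
  have h01 : p₀ < 1 := h0A.trans hA1
  have hp0 : (0:ℝ) < 1 - p₀ := by linarith
  have hpA : (0:ℝ) < p_A := h00.trans h0A
  have hpB : (0:ℝ) < p_B := h00.trans h0B
  have hA' : (0:ℝ) < 1 - p_A := by linarith
  have hB' : (0:ℝ) < 1 - p_B := by linarith
  rw [div_le_div_iff₀ (by positivity) (by positivity)]
  have h1 : (p₀ * (1 - p_A)) ^ a ≤ (p_A * (1 - p₀)) ^ a :=
    pow_le_pow_left₀ (by nlinarith) (by nlinarith) a
  have h2 : (p₀ * (1 - p_B)) ^ b' ≤ (p_B * (1 - p₀)) ^ b' :=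
    pow_le_pow_left₀ (by nlinarith) (by nlinarith) b'
  have hC : (0:ℝ) ≤ p₀ ^ (r₁ + b + r) * (1 - p₀) ^ (a' + r' + r₁') * p_B ^ b * (1 - p_A) ^ a' := by
    positivity
  calc
    p₀ ^ (a + r) * (1 - p₀) ^ (a' + r') * p_B ^ b * (1 - p_B) ^ b' *
        (p₀ ^ ((b + b') + r₁) * (1 - p₀) ^ (0 + r₁') * p_A ^ 0 * (1 - p_A) ^ (a + a'))
      = (p₀ ^ (r₁ + b + r) * (1 - p₀) ^ (a' + r' + r₁') * p_B ^ b * (1 - p_A) ^ a') *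
        ((p₀ * (1 - p_A)) ^ a * (p₀ * (1 - p_B)) ^ b') := by
        simp only [pow_add, mul_pow, pow_zero]; ring
    _ ≤ (p₀ ^ (r₁ + b + r) * (1 - p₀) ^ (a' + r' + r₁') * p_B ^ b * (1 - p_A) ^ a') *
        ((p_A * (1 - p₀)) ^ a * (p_B * (1 - p₀)) ^ b') := by
        apply mul_le_mul_of_nonneg_left _ hC
        exact mul_le_mul h1 h2 (by positivity) (by positivity)
    _ = p₀ ^ (0 + r₁) * (1 - p₀) ^ ((a + a') + r₁') * p_B ^ (b + b') * (1 - p_B) ^ 0 *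
        (p₀ ^ (b + r) * (1 - p₀) ^ (b' + r') * p_A ^ a * (1 - p_A) ^ a') := by
        simp only [pow_add, mul_pow, pow_zero]; ring

theorem file_ratio_maximized
    {ι : Type*} [DecidableEq ι] (M M_A M_B : Finset ι)
    (hMA : M_A ⊆ M) (hMB : M_B ⊆ M) (hdisj : M_A ∩ M_B = ∅)
    (p₀ p_A p_B : ℝ) (h00 : 0 < p₀) (h0A : p₀ < p_A) (h0B : p₀ < p_B)
    (hA1 : p_A < 1) (hB1 : p_B < 1)
    (K₁ : Finset ι) (hK₁ : K₁ ⊆ M) (hBsub : M_B ⊆ K₁) (hK₁A : K₁ ∩ M_A = ∅)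
    (K : Finset ι) (hK : K ⊆ M) :
    (p₀ ^ ((K ∩ (M \ M_B)).card) * (1 - p₀) ^ (((M \ K) ∩ (M \ M_B)).card) *
      p_B ^ ((K ∩ M_B).card) * (1 - p_B) ^ (((M \ K) ∩ M_B).card)) /
    (p₀ ^ ((K ∩ (M \ M_A)).card) * (1 - p₀) ^ (((M \ K) ∩ (M \ M_A)).card) *
      p_A ^ ((K ∩ M_A).card) * (1 - p_A) ^ (((M \ K) ∩ M_A).card)) ≤
    (p₀ ^ ((K₁ ∩ (M \ M_B)).card) * (1 - p₀) ^ (((M \ K₁) ∩ (M \ M_B)).card) *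
      p_B ^ ((K₁ ∩ M_B).card) * (1 - p_B) ^ (((M \ K₁) ∩ M_B).card)) /
    (p₀ ^ ((K₁ ∩ (M \ M_A)).card) * (1 - p₀) ^ (((M \ K₁) ∩ (M \ M_A)).card) *
      p_A ^ ((K₁ ∩ M_A).card) * (1 - p_A) ^ (((M \ K₁) ∩ M_A).card)) := by
  have hdisj' : M_B ∩ M_A = ∅ := by rw [Finset.inter_comm]; exact hdisj
  have hMK : M \ K ⊆ M := Finset.sdiff_subset
  have hMK₁ : M \ K₁ ⊆ M := Finset.sdiff_subset
  -- abbreviations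
  set a := (K ∩ M_A).card with ha
  set a' := ((M \ K) ∩ M_A).card with ha'
  set b := (K ∩ M_B).card with hb
  set b' := ((M \ K) ∩ M_B).card with hb'
  set r := (K \ (M_A ∪ M_B)).card with hr
  set r' := ((M \ K) \ (M_A ∪ M_B)).card with hr'
  set r₁ := (K₁ \ (M_A ∪ M_B)).card with hr₁
  set r₁' := ((M \ K₁) \ (M_A ∪ M_B)).card with hr₁'
  -- card identities for K
  have e1 : (K ∩ (M \ M_B)).card = a + r := card_split_aux M M_A M_B K hK hdisj
  have e2 : ((M \ K) ∩ (M \ M_B)).card = a' + r' := card_split_aux M M_A M_B (M \ K) hMK hdisj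
  have e3 : (K ∩ (M \ M_A)).card = b + r := by
    have := card_split_aux M M_B M_A K hK hdisj'
    rwa [Finset.union_comm] at this
  have e4 : ((M \ K) ∩ (M \ M_A)).card = b' + r' := by
    have := card_split_aux M M_B M_A (M \ K) hMK hdisj'
    rwa [Finset.union_comm] at this
  -- card identities for K₁
  have k1 : (K₁ ∩ M_A).card = 0 := by rw [hK₁A]; simp
  have k2 : (M \ K₁) ∩ M_A = M_A := by
    ext x
    simp only [Finset.mem_inter, Finset.mem_sdiff]
    constructor
    · rintro ⟨_, h⟩; exact h
    · intro hx
      refine ⟨⟨hMA hx, fun hxK => ?_⟩, hx⟩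
      exact (Finset.eq_empty_iff_forall_notMem.mp hK₁A x) (Finset.mem_inter.mpr ⟨hxK, hx⟩)
  have k3 : K₁ ∩ M_B = M_B := Finset.inter_eq_right.mpr hBsub
  have k4 : ((M \ K₁) ∩ M_B).card = 0 := by
    rw [Finset.card_eq_zero]
    ext x
    simp only [Finset.mem_inter, Finset.mem_sdiff, Finset.notMem_empty, iff_false, not_and]
    rintro ⟨_, hxK⟩ hxB
    exact hxK (hBsub hxB)
  have f1 : (K₁ ∩ (M \ M_B)).card = 0 + r₁ := by
    rw [card_split_aux M M_A M_B K₁ hK₁ hdisj, k1]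
  have f2 : ((M \ K₁) ∩ (M \ M_B)).card = (a + a') + r₁' := by
    rw [card_split_aux M M_A M_B (M \ K₁) hMK₁ hdisj]
    congr 1
    rw [k2, ← card_split_compl M M_A K hMA]
  have f3 : (K₁ ∩ (M \ M_A)).card = (b + b') + r₁ := by
    have := card_split_aux M M_B M_A K₁ hK₁ hdisj'
    rw [Finset.union_comm] at this
    rw [this, k3, ← card_split_compl M M_B K hMB]
  have f4 : ((M \ K₁) ∩ (M \ M_A)).card = 0 + r₁' := by
    have := card_split_aux M M_B M_A (M \ K₁) hMK₁ hdisj'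
    rw [Finset.union_comm] at this
    rw [this, k4]
  have f5 : (K₁ ∩ M_B).card = b + b' := by rw [k3, ← card_split_compl M M_B K hMB]
  have f6 : ((M \ K₁) ∩ M_A).card = a + a' := by rw [k2, ← card_split_compl M M_A K hMA]
  rw [e1, e2, e3, e4, f1, f2, f3, f4, f5, f6, k1, k4]
  exact ratio_ineq_aux p₀ p_A p_B h00 h0A h0B hA1 hB1 a a' b b' r r' r₁ r₁'
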